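/- Let n be a positive integer and define the affine circular sorting number t_aff(n) := max{ t([π]) : π ∈ S(ℤ_n), π(x) = a·x + b for some unit a ∈ (ℤ/nℤ)^× and some b ∈ ℤ_n }. Then t_aff(n) = n − Σ_{d | n} φ(d)/λ(d), where the sum ranges over positive divisors d of n, φ is Euler's totient function, and λ(d) is the Carmichael function, i.e., the exponent of the unit group (ℤ/dℤ)^× (the maximum multiplicative order of an element of (ℤ/dℤ)^×). -/

import Mathlib

/-- `cyc σ` is the number of cycles in the cycle decomposition of the permutation `σ`,
counting fixed points as cycles; i.e., the number of orbits of `σ`. -/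
noncomputable def cyc {α : Type*} (σ : Equiv.Perm α) : ℕ :=
  Nat.card (Quotient (Setoid.mk σ.SameCycle
    ⟨fun x => Equiv.Perm.SameCycle.refl σ x, fun h => h.symm, fun h h' => h.trans h'⟩))

/-- `t(π) = n - cyc(π)`, the minimum number of transpositions whose product is `π`. -/
noncomputable def tPerm {n : ℕ} (π : Equiv.Perm (ZMod n)) : ℕ := n - cyc π

/-- `t([π])`, the minimum of `t(π ∘ c^k)` over `k ∈ ℤ_n`, where `c : x ↦ x + 1`. -/
noncomputable def tCoset {n : ℕ} (π : Equiv.Perm (ZMod n)) : ℕ :=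
  sInf { m : ℕ | ∃ k : ZMod n, m = tPerm (π * Equiv.addRight k) }

/-- The circular sorting number `t(n)`, the maximum of `t([π])` over `π ∈ S(ℤ_n)`. -/
noncomputable def tCirc (n : ℕ) : ℕ :=
  sSup { m : ℕ | ∃ π : Equiv.Perm (ZMod n), m = tCoset π }

set_option linter.unusedSectionVars false
set_option linter.unusedVariables false
set_option linter.unnecessarySimpa false

open Finset

namespace TAffAux

variable {n : ℕ}

/-- The affine permutation `x ↦ a*x + b` of `ZMod n`. -/
def affine (a : (ZMod n)ˣ) (b : ZMod n) : Equiv.Perm (ZMod n) where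
  toFun x := (a : ZMod n) * x + b
  invFun y := (a⁻¹ : (ZMod n)ˣ) * (y - b)
  left_inv x := by
    simp only [add_sub_cancel_right, ← mul_assoc, ← Units.val_mul, inv_mul_cancel,
      Units.val_one, one_mul]
  right_inv y := by
    simp only [← mul_assoc, ← Units.val_mul, mul_inv_cancel, Units.val_one, one_mul,
      sub_add_cancel]

@[simp] lemma affine_apply (a : (ZMod n)ˣ) (b x : ZMod n) :
    affine a b x = (a : ZMod n) * x + b := rfl

lemma affine_mul_addRight (a : (ZMod n)ˣ) (b k : ZMod n) :
    affine a b * Equiv.addRight k = affine a ((a : ZMod n) * k + b) := by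
  ext x
  simp [affine_apply, Equiv.Perm.mul_apply, mul_add, add_assoc]

lemma affine_pow (a : (ZMod n)ˣ) (b : ZMod n) (k : ℕ) :
    (affine a b) ^ k = affine (a ^ k) ((∑ i ∈ range k, (a : ZMod n) ^ i) * b) := by
  induction k with
  | zero =>
    ext x; simp [affine_apply]
  | succ k ih =>
    ext x
    rw [pow_succ, Equiv.Perm.mul_apply, ih]
    simp only [affine_apply, Units.val_pow_eq_pow_val]
    rw [Finset.sum_range_succ]
    ring

lemma affine_zero_pow (a : (ZMod n)ˣ) (k : ℕ) :
    (affine a 0) ^ k = affine (a ^ k) 0 := by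
  rw [affine_pow, mul_zero]


variable {α : Type*} [Fintype α] [DecidableEq α]

/-- number of fixed points of `σ^k` -/
def fixCard (σ : Equiv.Perm α) (k : ℕ) : ℕ := #(univ.filter fun x => (σ ^ k) x = x)

lemma cyc_eq_card_orbits (σ : Equiv.Perm α) :
    cyc σ = Nat.card (Quotient (MulAction.orbitRel (Subgroup.zpowers σ) α)) := by
  apply congrArg (fun s : Setoid α => Nat.card (Quotient s))
  apply Setoid.ext
  intro x y
  show σ.SameCycle x y ↔ MulAction.orbitRel (Subgroup.zpowers σ) α x y
  rw [MulAction.orbitRel_apply, MulAction.mem_orbit_iff]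
  constructor
  · rintro ⟨i, hi⟩
    refine ⟨⟨σ ^ (-i), Subgroup.zpow_mem _ (Subgroup.mem_zpowers σ) (-i)⟩, ?_⟩
    show (σ ^ (-i)) y = x
    rw [← hi, zpow_neg]
    exact Equiv.symm_apply_apply _ _
  · rintro ⟨⟨g, hg⟩, h⟩
    obtain ⟨i, rfl⟩ := Subgroup.mem_zpowers_iff.mp hg
    have h' : (σ ^ i) y = x := h
    refine ⟨-i, ?_⟩
    rw [← h', zpow_neg]
    exact Equiv.symm_apply_apply _ _

lemma natcard_fix (σ : Equiv.Perm α) (k : ℕ) :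
    Nat.card {x : α // (σ ^ k) x = x} = fixCard σ k := by
  simp [Nat.card_eq_fintype_card, fixCard, Fintype.card_subtype]

lemma cyc_mul_orderOf (σ : Equiv.Perm α) :
    cyc σ * orderOf σ = ∑ k ∈ range (orderOf σ), fixCard σ k := by
  classical
  set G := Subgroup.zpowers σ with hG
  letI : Fintype (Quotient (MulAction.orbitRel G α)) := Fintype.ofFinite _
  letI : ∀ g : G, Fintype (MulAction.fixedBy α g) := fun g => Fintype.ofFinite _
  have burn := MulAction.sum_card_fixedBy_eq_card_orbits_mul_card_group G α
  have hfo : IsOfFinOrder σ := isOfFinOrder_of_finite σ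
  have hcards : Fintype.card G = orderOf σ := Fintype.card_zpowers
  have hΩ : Fintype.card (Quotient (MulAction.orbitRel G α)) = cyc σ := by
    rw [cyc_eq_card_orbits, Nat.card_eq_fintype_card]
  -- rewrite the LHS of burn as a sum over range
  have hL : (∑ g : G, Fintype.card (MulAction.fixedBy α g))
      = ∑ k ∈ range (orderOf σ), fixCard σ k := by
    let E : Fin (orderOf σ) ≃ G :=
      (finEquivZPowers hfo).trans (Equiv.subtypeEquivRight fun x => Iff.rfl)
    rw [← Fintype.sum_equiv E
      (fun i => Fintype.card (MulAction.fixedBy α (E i)))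
      (fun g => Fintype.card (MulAction.fixedBy α g)) (fun i => rfl)]
    rw [← Fin.sum_univ_eq_sum_range (fun k => fixCard σ k) (orderOf σ)]
    apply Fintype.sum_congr
    intro i
    rw [← natcard_fix σ (i : ℕ), Nat.card_eq_fintype_card]
    apply Fintype.card_congr
    apply Equiv.subtypeEquivRight
    intro x
    have hEi : ((E i : G) : Equiv.Perm α) = σ ^ (i : ℕ) := rfl
    have key : (E i) • x = (σ ^ (i : ℕ)) x := by
      show ((E i : G) : Equiv.Perm α) x = (σ ^ (i : ℕ)) x
      rw [hEi]
    rw [MulAction.mem_fixedBy, key]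
  rw [hL, hΩ, hcards] at burn
  exact burn.symm

lemma fixCard_mul_add (σ : Equiv.Perm α) (t k : ℕ) :
    fixCard σ (orderOf σ * t + k) = fixCard σ k := by
  unfold fixCard
  congr 1
  apply Finset.filter_congr
  intro x _
  rw [pow_add, pow_mul, pow_orderOf_eq_one, one_pow, one_mul]

lemma cyc_mul_of_orderOf_dvd (σ : Equiv.Perm α) {M : ℕ} (h : orderOf σ ∣ M) :
    cyc σ * M = ∑ k ∈ range M, fixCard σ k := by
  obtain ⟨t, rfl⟩ := h
  induction t with
  | zero => simp
  | succ t ih =>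
    rw [Nat.mul_succ, Finset.sum_range_add, ← ih, mul_add, cyc_mul_orderOf]
    congr 1
    exact Finset.sum_congr rfl fun k _ => (fixCard_mul_add σ t k).symm


-- NEW MATERIAL
/-- order of the reduction of the unit `a` mod `d`. -/
noncomputable def ordRed (n : ℕ) (a : (ZMod n)ˣ) (d : ℕ) : ℕ :=
  if h : d ∣ n then orderOf (ZMod.unitsMap h a) else 1

section
variable [NeZero n]

lemma coe_pow_orderOf (a : (ZMod n)ˣ) : (a : ZMod n) ^ orderOf a = 1 := by
  rw [← Units.val_pow_eq_pow_val, pow_orderOf_eq_one, Units.val_one]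

lemma sum_pow_orderOf_mul (a : (ZMod n)ˣ) :
    (∑ i ∈ range (orderOf a * n), (a : ZMod n) ^ i) = 0 := by
  have key : ∀ t : ℕ, (∑ i ∈ range (orderOf a * t), (a : ZMod n) ^ i)
      = (t : ZMod n) * ∑ i ∈ range (orderOf a), (a : ZMod n) ^ i := by
    intro t
    induction t with
    | zero => simp
    | succ t ih =>
      rw [Nat.mul_succ, Finset.sum_range_add, ih]
      have : ∀ j, (a : ZMod n) ^ (orderOf a * t + j) = (a : ZMod n) ^ j := by
        intro j
        rw [pow_add, pow_mul, coe_pow_orderOf, one_pow, one_mul]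
      rw [Finset.sum_congr rfl fun j _ => this j]
      push_cast
      ring
  rw [key n, ZMod.natCast_self, zero_mul]

lemma affine_one_zero : (affine (1 : (ZMod n)ˣ) (0 : ZMod n)) = 1 := by
  ext x; simp

lemma affine_pow_eq_one (a : (ZMod n)ˣ) (b : ZMod n) :
    (affine a b) ^ (orderOf a * n) = 1 := by
  rw [affine_pow, sum_pow_orderOf_mul, zero_mul]
  have : a ^ (orderOf a * n) = 1 := by
    rw [pow_mul, pow_orderOf_eq_one, one_pow]
  rw [this, affine_one_zero]

lemma orderOf_affine_dvd (a : (ZMod n)ˣ) (b : ZMod n) :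
    orderOf (affine a b) ∣ orderOf a * n :=
  orderOf_dvd_of_pow_eq_one (affine_pow_eq_one a b)

lemma fixCard_affine_le (a : (ZMod n)ˣ) (b : ZMod n) (k : ℕ) :
    fixCard (affine a b) k ≤ fixCard (affine a 0) k := by
  simp only [fixCard, affine_pow, affine_apply, mul_zero, add_zero, Units.val_pow_eq_pow_val]
  set c := (∑ i ∈ range k, (a : ZMod n) ^ i) * b with hc
  rcases (univ.filter fun x => ((a : ZMod n) ^ k * x + c = x)).eq_empty_or_nonempty with h | h
  · rw [h]; simp
  · obtain ⟨x₀, hx₀⟩ := h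
    simp only [mem_filter, mem_univ, true_and] at hx₀
    apply Finset.card_le_card_of_injOn (fun x => x - x₀)
    · intro x hx
      simp only [Finset.mem_coe, mem_filter, mem_univ, true_and] at hx ⊢
      calc (a:ZMod n)^k * (x - x₀)
          = ((a:ZMod n)^k * x + c) - ((a:ZMod n)^k * x₀ + c) := by ring
        _ = x - x₀ := by rw [hx, hx₀]
    · intro x _ y _ h
      simpa [sub_left_injective.eq_iff] using h
  
lemma cyc_affine_le (a : (ZMod n)ˣ) (b : ZMod n) :
    cyc (affine a b) ≤ cyc (affine a 0) := by
  have hM : 0 < orderOf a * n :=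
    Nat.mul_pos (orderOf_pos a) (Nat.pos_of_ne_zero (NeZero.ne n))
  have h1 := cyc_mul_of_orderOf_dvd (affine a b) (orderOf_affine_dvd a b)
  have h2 := cyc_mul_of_orderOf_dvd (affine a (0 : ZMod n)) (orderOf_affine_dvd a 0)
  have hle : cyc (affine a b) * (orderOf a * n) ≤ cyc (affine a 0) * (orderOf a * n) := by
    rw [h1, h2]
    exact Finset.sum_le_sum fun k _ => fixCard_affine_le a b k
  exact Nat.le_of_mul_le_mul_right hle hM

lemma count_multiples {e M : ℕ} (he : 0 < e) (hdvd : e ∣ M) :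
    #(Finset.filter (fun k => e ∣ k) (range M)) = M / e := by
  have : Finset.filter (fun k => e ∣ k) (range M) = (range (M / e)).image (fun j => e * j) := by
    ext k
    simp only [mem_filter, mem_range, mem_image]
    constructor
    · rintro ⟨hk, j, rfl⟩
      refine ⟨j, ?_, by ring⟩
      have : e * j / e < M / e := Nat.div_lt_div_of_lt_of_dvd hdvd (by simpa using hk)
      simpa [Nat.mul_div_cancel_left _ he] using this
    · rintro ⟨j, hj, rfl⟩
      constructor
      · calc e * j < e * (M / e) := by
              exact (Nat.mul_lt_mul_left he).mpr hj
          _ = M := Nat.mul_div_cancel' hdvd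
      · exact Dvd.intro j rfl
  rw [this, Finset.card_image_of_injective _ (mul_right_injective₀ he.ne'), Finset.card_range]

lemma ordRed_pos (a : (ZMod n)ˣ) (d : ℕ) (hd : d ∣ n) : 0 < ordRed n a d := by
  rw [ordRed, dif_pos hd]
  haveI : NeZero d := ⟨fun h => by subst h; exact NeZero.ne n (Nat.eq_zero_of_zero_dvd hd)⟩
  exact orderOf_pos _

lemma ordRed_dvd_orderOf (a : (ZMod n)ˣ) (d : ℕ) (hd : d ∣ n) : ordRed n a d ∣ orderOf a := by
  rw [ordRed, dif_pos hd]
  exact orderOf_map_dvd _ a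

/-- key pointwise fixed-point criterion -/
lemma affine_zero_pow_fixed_iff (a : (ZMod n)ˣ) (x : ZMod n) (k : ℕ) :
    ((affine a 0) ^ k) x = x ↔ ordRed n a (addOrderOf x) ∣ k := by
  have hd : addOrderOf x ∣ n := by
    have := addOrderOf_dvd_card (x := x)
    rwa [ZMod.card] at this
  haveI : NeZero (addOrderOf x) :=
    ⟨fun h => by exact NeZero.ne n (Nat.eq_zero_of_zero_dvd (h ▸ hd))⟩
  rw [ordRed, dif_pos hd]
  rw [affine_zero_pow]
  simp only [affine_apply, add_zero, Units.val_pow_eq_pow_val]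
  set c : ZMod n := (a : ZMod n) ^ k - 1 with hc
  have step1 : (a : ZMod n) ^ k * x = x ↔ c * x = 0 := by
    rw [hc, sub_mul, one_mul, sub_eq_zero]
  have step2 : c * x = 0 ↔ addOrderOf x ∣ c.val := by
    have hcast : c.val • x = c * x := by
      rw [nsmul_eq_mul, ZMod.natCast_val, ZMod.cast_id]
    rw [addOrderOf_dvd_iff_nsmul_eq_zero, hcast]
  have step3 : addOrderOf x ∣ c.val ↔ (ZMod.castHom hd (ZMod (addOrderOf x))) c = 0 := by
    rw [← ZMod.natCast_eq_zero_iff, ZMod.castHom_apply, ZMod.natCast_val]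
  have step4 : (ZMod.castHom hd (ZMod (addOrderOf x))) c = 0 ↔
      (ZMod.unitsMap hd a) ^ k = 1 := by
    rw [hc, map_sub, map_pow, map_one, sub_eq_zero]
    rw [ZMod.unitsMap_def]
    rw [Units.ext_iff, Units.val_pow_eq_pow_val, Units.coe_map, Units.val_one]
    rfl
  rw [step1, step2, step3, step4, orderOf_dvd_iff_pow_eq_one]

lemma cyc_affine_zero (a : (ZMod n)ˣ) :
    cyc (affine a 0) = ∑ d ∈ n.divisors, d.totient / ordRed n a d := by
  have hn0 : n ≠ 0 := NeZero.ne n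
  set M := orderOf a * n with hM
  have hMpos : 0 < M := Nat.mul_pos (orderOf_pos a) (Nat.pos_of_ne_zero hn0)
  have key := cyc_mul_of_orderOf_dvd (affine a (0 : ZMod n)) (orderOf_affine_dvd a 0)
  -- swap the double count
  have swap : (∑ k ∈ range M, fixCard (affine a 0) k)
      = ∑ x : ZMod n, #(Finset.filter (fun k => ((affine a 0) ^ k) x = x) (range M)) := by
    simp only [fixCard, Finset.card_filter]
    rw [Finset.sum_comm]
  have inner : ∀ x : ZMod n,
      #(Finset.filter (fun k => ((affine a 0) ^ k) x = x) (range M))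
        = M / ordRed n a (addOrderOf x) := by
    intro x
    have hd : addOrderOf x ∣ n := by
      have := addOrderOf_dvd_card (x := x); rwa [ZMod.card] at this
    have : (Finset.filter (fun k => ((affine a 0) ^ k) x = x) (range M))
        = Finset.filter (fun k => ordRed n a (addOrderOf x) ∣ k) (range M) := by
      apply Finset.filter_congr
      intro k _
      simp [affine_zero_pow_fixed_iff]
    rw [this]
    exact count_multiples (ordRed_pos a _ hd)
      ((ordRed_dvd_orderOf a _ hd).trans (Dvd.intro n rfl))
  -- group by additive order
  have grouped : (∑ x : ZMod n, M / ordRed n a (addOrderOf x))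
      = ∑ d ∈ n.divisors, (d.totient * (M / ordRed n a d)) := by
    rw [← Finset.sum_fiberwise_of_maps_to (g := fun x : ZMod n => addOrderOf x)
      (t := n.divisors) (fun x _ => Nat.mem_divisors.mpr ⟨by
        have := addOrderOf_dvd_card (x := x); rwa [ZMod.card] at this, hn0⟩)]
    apply Finset.sum_congr rfl
    intro d hd
    have : ∀ x ∈ univ.filter (fun x : ZMod n => addOrderOf x = d),
        M / ordRed n a (addOrderOf x) = M / ordRed n a d := by
      intro x hx
      simp only [mem_filter] at hx
      rw [hx.2]
    rw [Finset.sum_congr rfl this, Finset.sum_const, smul_eq_mul]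
    congr 1
    have := IsAddCyclic.card_addOrderOf_eq_totient (α := ZMod n)
      (d := d) (by rw [ZMod.card]; exact (Nat.mem_divisors.mp hd).1)
    convert this using 2
  -- each term
  have term : ∀ d ∈ n.divisors,
      d.totient * (M / ordRed n a d) = (d.totient / ordRed n a d) * M := by
    intro d hd
    obtain ⟨hdvd, -⟩ := Nat.mem_divisors.mp hd
    haveI : NeZero d := ⟨fun h => hn0 (Nat.eq_zero_of_zero_dvd (h ▸ hdvd))⟩
    have he_phi : ordRed n a d ∣ d.totient := by
      rw [ordRed, dif_pos hdvd]
      have := orderOf_dvd_card (x := ZMod.unitsMap hdvd a)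
      rwa [ZMod.card_units_eq_totient] at this
    have he_M : ordRed n a d ∣ M :=
      (ordRed_dvd_orderOf a d hdvd).trans (Dvd.intro n rfl)
    rw [← Nat.mul_div_assoc _ he_M, Nat.mul_comm (d.totient / ordRed n a d) M,
      ← Nat.mul_div_assoc _ he_phi, Nat.mul_comm M d.totient]
  have : cyc (affine a (0 : ZMod n)) * M
      = (∑ d ∈ n.divisors, d.totient / ordRed n a d) * M := by
    rw [key, swap, Finset.sum_congr rfl fun x _ => inner x, grouped,
      Finset.sum_congr rfl term, Finset.sum_mul]
  exact Nat.eq_of_mul_eq_mul_right hMpos this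

end

-- number theory part
lemma unit_pow_eq_one_iff {N : ℕ} [NeZero N] (u : (ZMod N)ˣ) (V : ℤ)
    (hV : (V : ZMod N) = (u : ZMod N)) (k : ℕ) :
    u ^ k = 1 ↔ (N : ℤ) ∣ V ^ k - 1 := by
  rw [Units.ext_iff, Units.val_pow_eq_pow_val, Units.val_one, ← hV, ← ZMod.intCast_zmod_eq_zero_iff_dvd]
  push_cast
  rw [sub_eq_zero]

lemma not_dvd_of_coprime {v p : ℕ} (hp : 2 ≤ p) (h : Nat.Coprime v p) : ¬ p ∣ v := by
  intro hd
  have h1 : p ∣ Nat.gcd v p := Nat.dvd_gcd hd dvd_rfl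
  rw [h] at h1
  have := Nat.eq_one_of_dvd_one h1
  omega

lemma exp_dvd_card (d : ℕ) [NeZero d] : Monoid.exponent (ZMod d)ˣ ∣ d.totient := by
  rw [← ZMod.card_units_eq_totient]
  exact Group.exponent_dvd_card

lemma exponent_units_dvd (p : ℕ) (hp : p.Prime) (f : ℕ) (hf : 1 ≤ f) :
    Monoid.exponent (ZMod (p ^ f))ˣ ∣ (p - 1) * p ^ (f - 1) := by
  haveI : Fact p.Prime := ⟨hp⟩
  haveI : NeZero (p ^ f) := ⟨pow_ne_zero f hp.pos.ne'⟩
  apply Monoid.exponent_dvd_of_forall_pow_eq_one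
  intro u
  set V : ℤ := ((u : ZMod (p ^ f)).val : ℤ) with hVdef
  have hV : (V : ZMod (p ^ f)) = (u : ZMod (p ^ f)) := by
    rw [hVdef]; push_cast; rw [ZMod.natCast_val, ZMod.cast_id]
  have hcop : Nat.Coprime (u : ZMod (p ^ f)).val (p ^ f) := ZMod.val_coe_unit_coprime u
  have hpd : p ∣ p ^ f := dvd_pow_self p (by omega)
  have hcop' : Nat.Coprime (u : ZMod (p ^ f)).val p := Nat.Coprime.coprime_dvd_right hpd hcop
  -- Fermat little theorem
  have hne : ((u : ZMod (p ^ f)).val : ZMod p) ≠ 0 := by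
    rw [Ne, ZMod.natCast_eq_zero_iff]
    intro h
    exact not_dvd_of_coprime hp.two_le hcop' h
  have fermat : ((u : ZMod (p ^ f)).val : ZMod p) ^ (p - 1) = 1 :=
    ZMod.pow_card_sub_one_eq_one hne
  have hint : (p : ℤ) ∣ V ^ (p - 1) - 1 := by
    rw [← ZMod.intCast_zmod_eq_zero_iff_dvd, hVdef]
    push_cast
    rw [sub_eq_zero, fermat]
  have key := dvd_sub_pow_of_dvd_sub hint (f - 1)
  rw [one_pow, ← pow_mul] at key
  have hf' : f - 1 + 1 = f := by omega
  rw [hf'] at key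
  rw [unit_pow_eq_one_iff u V hV]
  rw [show ((p : ℕ) ^ f : ℕ) = ((p : ℤ) ^ f : ℤ) by push_cast; ring] at *
  exact_mod_cast key

lemma odd_sq_pow (V : ℤ) (hV : Odd V) : ∀ k : ℕ, (2 : ℤ) ^ (k + 3) ∣ V ^ 2 ^ (k + 1) - 1 := by
  intro k
  induction k with
  | zero =>
    obtain ⟨m, rfl⟩ := hV
    obtain ⟨t, ht⟩ := Int.even_mul_succ_self m
    refine ⟨t, ?_⟩
    have h2 : (2*m+1) ^ 2 ^ (0+1) - 1 = 4 * (m * (m+1)) := by ring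
    rw [h2, ht]
    ring
  | succ k ih =>
    obtain ⟨w, hw⟩ := ih
    have hodd : Odd (V ^ 2 ^ (k + 1)) := hV.pow
    obtain ⟨y, hy⟩ := hodd
    have : V ^ 2 ^ (k + 2) - 1 = (V ^ 2 ^ (k + 1) - 1) * (V ^ 2 ^ (k + 1) + 1) := by
      rw [show (2:ℕ) ^ (k + 2) = 2 ^ (k + 1) * 2 by ring, pow_mul]
      ring
    rw [this, hw, hy]
    exact ⟨w * (y + 1), by ring⟩

lemma exponent_units_two_dvd (f : ℕ) (hf : 3 ≤ f) :
    Monoid.exponent (ZMod (2 ^ f))ˣ ∣ 2 ^ (f - 2) := by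
  haveI : NeZero (2 ^ f) := ⟨pow_ne_zero f two_ne_zero⟩
  apply Monoid.exponent_dvd_of_forall_pow_eq_one
  intro u
  set V : ℤ := ((u : ZMod (2 ^ f)).val : ℤ) with hVdef
  have hV : (V : ZMod (2 ^ f)) = (u : ZMod (2 ^ f)) := by
    rw [hVdef]; push_cast; rw [ZMod.natCast_val, ZMod.cast_id]
  have hcop : Nat.Coprime (u : ZMod (2 ^ f)).val (2 ^ f) := ZMod.val_coe_unit_coprime u
  have hodd : Odd V := by
    rw [hVdef, Int.odd_coe_nat, Nat.odd_iff]
    have h2 : (2:ℕ) ∣ 2 ^ f := dvd_pow_self 2 (by omega)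
    have hnd := not_dvd_of_coprime (le_refl 2) (Nat.Coprime.coprime_dvd_right h2 hcop)
    omega
  have key := odd_sq_pow V hodd (f - 3)
  rw [show f - 3 + 3 = f by omega, show f - 3 + 1 = f - 2 by omega] at key
  rw [unit_pow_eq_one_iff u V hV]
  exact_mod_cast key

lemma three_pow_two_pow (k : ℕ) (hk : 1 ≤ k) :
    ∃ m : ℕ, Odd m ∧ 3 ^ 2 ^ k = 1 + 2 ^ (k + 2) * m := by
  induction k with
  | zero => omega
  | succ k ih =>
    rcases Nat.eq_or_lt_of_le hk with h1 | h2
    · exact ⟨1, odd_one, by rw [← h1]; norm_num⟩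
    · have hk' : 1 ≤ k := by omega
      obtain ⟨m, hm, heq⟩ := ih hk'
      refine ⟨m + 2 ^ (k + 1) * m ^ 2, ?_, ?_⟩
      · rcases hm with ⟨t, rfl⟩
        exact ⟨t + 2 ^ k * (2*t+1) ^ 2, by ring⟩
      · rw [show (2:ℕ) ^ (k + 1) = 2 ^ k * 2 by ring, pow_mul, heq]
        ring

-- NEW
lemma exponent_units_one_dvd {d : ℕ} [NeZero d] (htot : d.totient = 1) (m : ℕ) :
    Monoid.exponent (ZMod d)ˣ ∣ m := by
  have h := exp_dvd_card d
  rw [htot, Nat.dvd_one] at h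
  rw [h]
  exact one_dvd m

lemma one_add_prime_pow_pow (p : ℕ) (hp : p.Prime) (hp3 : 3 ≤ p) (k : ℕ) :
    ∃ m : ℕ, ¬ p ∣ m ∧ (1 + p) ^ p ^ k = 1 + p ^ (k + 1) * m := by
  induction k with
  | zero =>
    refine ⟨1, fun h => ?_, by norm_num⟩
    have := Nat.dvd_one.mp h
    omega
  | succ k ih =>
    obtain ⟨m, hm, heq⟩ := ih
    have h1 : (1 + p) ^ p ^ (k + 1) = ((1 + p) ^ p ^ k) ^ p := by
      rw [← pow_mul, ← pow_succ]
    have expand : (1 + p) ^ p ^ (k + 1)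
        = ∑ i ∈ range (p + 1), (p ^ (k+1) * m) ^ i * 1 ^ (p - i) * p.choose i := by
      rw [h1, heq, add_comm 1 (p ^ (k+1) * m)]
      exact add_pow _ _ _
    have hsplit : p + 1 = (p - 1) + 1 + 1 := by omega
    rw [hsplit, Finset.sum_range_succ', Finset.sum_range_succ'] at expand
    simp only [pow_zero, one_mul, one_pow, mul_one, Nat.choose_zero_right, pow_one,
      Nat.choose_one_right, zero_add] at expand
    have hdvd : (p : ℕ) ^ (k + 3) ∣ (∑ i ∈ range (p - 1),
        (p ^ (k+1) * m) ^ (i + 1 + 1) * p.choose (i + 1 + 1)) := by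
      apply Finset.dvd_sum
      intro i hi
      have hi' := Finset.mem_range.mp hi
      rcases Nat.lt_or_ge (i + 1 + 1) p with hlt | hge
      · -- i + 2 < p : use p ∣ choose
        have hchoose : p ∣ p.choose (i + 1 + 1) := Nat.Prime.dvd_choose_self hp (by omega) hlt
        have hpow : p ^ (k + 2) ∣ (p ^ (k+1) * m) ^ (i + 1 + 1) := by
          rw [mul_pow, ← pow_mul]
          exact dvd_mul_of_dvd_left (pow_dvd_pow p (by nlinarith)) _
        calc p ^ (k + 3) = p ^ (k + 2) * p := by ring
          _ ∣ (p ^ (k+1) * m) ^ (i + 1 + 1) * p.choose (i + 1 + 1) :=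
            mul_dvd_mul hpow hchoose
      · -- i + 2 = p
        have hip : i + 1 + 1 = p := by omega
        have hpow : p ^ (k + 3) ∣ (p ^ (k+1) * m) ^ (i + 1 + 1) := by
          rw [mul_pow, ← pow_mul]
          exact dvd_mul_of_dvd_left (pow_dvd_pow p (by nlinarith)) _
        exact hpow.mul_right _
    obtain ⟨w, hw⟩ := hdvd
    refine ⟨m + p * w, fun h => hm ?_, ?_⟩
    · -- p ∣ m + p*w → p ∣ m
      rw [add_comm] at h
      exact (Nat.dvd_add_right (dvd_mul_right p w)).mp h
    · rw [expand, hw]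
      ring

lemma primePow_good_two (e : ℕ) (he : 1 ≤ e) :
    ∃ a : (ZMod (2 ^ e))ˣ, ∀ d (h : d ∣ 2 ^ e),
      Monoid.exponent (ZMod d)ˣ ∣ orderOf (ZMod.unitsMap h a) := by
  haveI : NeZero (2 ^ e) := ⟨pow_ne_zero e two_ne_zero⟩
  have hcop : Nat.Coprime 3 (2 ^ e) := Nat.Coprime.pow_right _ (by norm_num)
  refine ⟨ZMod.unitOfCoprime 3 hcop, ?_⟩
  intro d hd
  obtain ⟨f, hfe, rfl⟩ := (Nat.dvd_prime_pow Nat.prime_two).mp hd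
  haveI : NeZero (2 ^ f) := ⟨pow_ne_zero f two_ne_zero⟩
  set u := ZMod.unitsMap hd (ZMod.unitOfCoprime 3 hcop) with hu_def
  have hu : (u : ZMod (2 ^ f)) = ((3 : ℕ) : ZMod (2 ^ f)) := by
    rw [hu_def, ZMod.unitsMap_def]
    rw [Units.coe_map]
    show (ZMod.castHom hd (ZMod (2^f))) ((ZMod.unitOfCoprime 3 hcop : ZMod (2^e))) = _
    rw [ZMod.coe_unitOfCoprime, map_natCast]
  have hV : ((3 : ℤ) : ZMod (2 ^ f)) = (u : ZMod (2 ^ f)) := by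
    rw [hu]; push_cast; ring
  rcases Nat.lt_or_ge f 3 with hf3 | hf3
  · interval_cases f
    · exact exponent_units_one_dvd (by norm_num) _
    · exact exponent_units_one_dvd (by norm_num) _
    · -- f = 2 : exponent ∣ 2 = orderOf u
      have hord : orderOf u = 2 := by
        haveI : Fact (Nat.Prime 2) := ⟨Nat.prime_two⟩
        apply orderOf_eq_prime
        · rw [unit_pow_eq_one_iff u 3 hV]
          norm_num
        · intro h
          rw [h, Units.val_one] at hu
          have : ((3:ℕ) : ZMod 4) = 1 := hu.symm
          rw [show ((4:ℕ):ℕ) = 4 from rfl] at this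
          revert this
          decide
      rw [hord]
      have h2 : (Nat.totient (2^2)) = 2 := by decide
      have := exp_dvd_card (2^2)
      rwa [h2] at this
  · -- f ≥ 3
    have hexp := exponent_units_two_dvd f hf3
    have hord_dvd : orderOf u ∣ 2 ^ (f - 2) := (Monoid.order_dvd_exponent u).trans hexp
    have hord : orderOf u = 2 ^ (f - 2) := by
      obtain ⟨j, hj, hOrd⟩ := (Nat.dvd_prime_pow Nat.prime_two).mp hord_dvd
      rcases Nat.eq_or_lt_of_le hj with rfl | hlt
      · exact hOrd
      exfalso
      have hdvd2 : orderOf u ∣ 2 ^ (f - 3) := hOrd ▸ pow_dvd_pow 2 (by omega)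
      have hpow1 : u ^ (2 ^ (f - 3)) = 1 := orderOf_dvd_iff_pow_eq_one.mp hdvd2
      rw [unit_pow_eq_one_iff u 3 hV] at hpow1
      rcases Nat.eq_or_lt_of_le hf3 with hf3' | hf4
      · -- f = 3
        rw [← hf3'] at hpow1
        norm_num at hpow1
      · -- f ≥ 4
        obtain ⟨m, hmodd, heq⟩ := three_pow_two_pow (f - 3) (by omega)
        have heqz : (3:ℤ) ^ 2 ^ (f - 3) - 1 = 2 ^ (f - 1) * m := by
          have : ((3:ℕ) ^ 2 ^ (f-3) : ℤ) = ((1 + 2 ^ ((f-3) + 2) * m : ℕ) : ℤ) := by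
            exact_mod_cast congrArg (fun x : ℕ => (x : ℤ)) heq
          push_cast at this
          rw [this, show f - 3 + 2 = f - 1 by omega]
          ring
        rw [heqz] at hpow1
        have h2f : ((2:ℤ) ^ f) = 2 ^ (f - 1) * 2 := by
          rw [← pow_succ, show f - 1 + 1 = f by omega]
        rw [show ((2^f : ℕ) : ℤ) = (2:ℤ)^f by push_cast; ring, h2f] at hpow1
        have : (2:ℤ) ∣ (m : ℤ) := by
          have hne : ((2:ℤ) ^ (f-1)) ≠ 0 := by positivity
          exact (mul_dvd_mul_iff_left hne).mp hpow1
        have : (2:ℕ) ∣ m := by exact_mod_cast this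
        rw [Nat.odd_iff] at hmodd
        omega
    rw [hord]
    exact hexp


lemma primePow_good_odd (p : ℕ) (hp : p.Prime) (hp3 : 3 ≤ p) (e : ℕ) (he : 1 ≤ e) :
    ∃ a : (ZMod (p ^ e))ˣ, ∀ d (h : d ∣ p ^ e),
      Monoid.exponent (ZMod d)ˣ ∣ orderOf (ZMod.unitsMap h a) := by
  haveI : Fact p.Prime := ⟨hp⟩
  haveI : NeZero (p ^ e) := ⟨pow_ne_zero e hp.pos.ne'⟩
  have hpp : p ∣ p ^ e := dvd_pow_self p (by omega)
  obtain ⟨g0, hg0⟩ := IsCyclic.exists_generator (α := (ZMod p)ˣ)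
  have hordg0 : orderOf g0 = p - 1 := by
    rw [orderOf_eq_card_of_forall_mem_zpowers hg0, Nat.card_eq_fintype_card,
      ZMod.card_units_eq_totient, Nat.totient_prime hp]
  obtain ⟨G, hG⟩ := ZMod.unitsMap_surjective hpp g0
  have hcop1p : Nat.Coprime (1 + p) p := by
    rw [Nat.Coprime, Nat.gcd_add_self_left, Nat.gcd_comm, Nat.gcd_one_right]
  have hcop : Nat.Coprime (1 + p) (p ^ e) := Nat.Coprime.pow_right _ hcop1p
  set τ : (ZMod (p ^ e))ˣ := ZMod.unitOfCoprime (1 + p) hcop with hτ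
  refine ⟨G ^ (p ^ e) * τ, ?_⟩
  intro d hd
  obtain ⟨f, hfe, rfl⟩ := (Nat.dvd_prime_pow hp).mp hd
  rcases Nat.eq_zero_or_pos f with rfl | hf
  · exact exponent_units_one_dvd (by simp) _
  haveI : NeZero (p ^ f) := ⟨pow_ne_zero f hp.pos.ne'⟩
  set u := ZMod.unitsMap hd G with hu_def
  set t := ZMod.unitsMap hd τ with ht_def
  have hmap : ZMod.unitsMap hd (G ^ (p ^ e) * τ) = u ^ (p ^ e) * t := by
    rw [map_mul, map_pow]
  -- value of t
  have htco : (t : ZMod (p ^ f)) = ((1 + p : ℕ) : ZMod (p ^ f)) := by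
    rw [ht_def, ZMod.unitsMap_def, Units.coe_map]
    show (ZMod.castHom hd (ZMod (p ^ f))) ((τ : ZMod (p ^ e))) = _
    rw [hτ, ZMod.coe_unitOfCoprime, map_natCast]
  have hVt : (((1 + p : ℕ) : ℤ) : ZMod (p ^ f)) = (t : ZMod (p ^ f)) := by
    rw [htco]; push_cast; ring
  -- order of t
  have ht_pow : t ^ (p ^ (f - 1)) = 1 := by
    rw [unit_pow_eq_one_iff t _ hVt]
    have hdvd : ((p : ℤ)) ∣ ((1 + p : ℕ) : ℤ) - 1 := ⟨1, by push_cast; ring⟩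
    have key := dvd_sub_pow_of_dvd_sub hdvd (f - 1)
    rw [one_pow, show f - 1 + 1 = f by omega] at key
    rw [show ((p ^ f : ℕ) : ℤ) = (p : ℤ) ^ f by push_cast; ring]
    exact key
  have ht_ord_dvd : orderOf t ∣ p ^ (f - 1) := orderOf_dvd_of_pow_eq_one ht_pow
  have ht_ord : orderOf t = p ^ (f - 1) := by
    obtain ⟨j, hj, hOrd⟩ := (Nat.dvd_prime_pow hp).mp ht_ord_dvd
    rcases Nat.eq_or_lt_of_le hj with rfl | hlt
    · exact hOrd
    exfalso
    have hf2 : 2 ≤ f := by omega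
    have hdvd2 : orderOf t ∣ p ^ (f - 2) := hOrd ▸ pow_dvd_pow p (by omega)
    have hpow1 : t ^ (p ^ (f - 2)) = 1 := orderOf_dvd_iff_pow_eq_one.mp hdvd2
    rw [unit_pow_eq_one_iff t _ hVt] at hpow1
    obtain ⟨m, hm, heq⟩ := one_add_prime_pow_pow p hp hp3 (f - 2)
    have heqz : ((1 + p : ℕ) : ℤ) ^ p ^ (f - 2) - 1 = (p : ℤ) ^ (f - 1) * m := by
      have hcast : ((1 + p : ℕ) : ℤ) ^ p ^ (f - 2) = 1 + (p : ℤ) ^ (f - 2 + 1) * (m : ℤ) := by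
        exact_mod_cast heq
      rw [hcast, show f - 2 + 1 = f - 1 by omega]
      ring
    rw [heqz, show ((p ^ f : ℕ) : ℤ) = (p : ℤ) ^ (f - 1) * p by
      push_cast [← pow_succ, show f - 1 + 1 = f by omega]; ring] at hpow1
    have hp_ne : ((p : ℤ) ^ (f - 1)) ≠ 0 := by positivity
    have hdvdm : (p : ℤ) ∣ (m : ℤ) := (mul_dvd_mul_iff_left hp_ne).mp hpow1
    exact hm (by exact_mod_cast hdvdm)
  -- order of u ^ (p ^ e)
  have hppf : p ∣ p ^ f := dvd_pow_self p hf.ne'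
  have hredu : ZMod.unitsMap hppf u = g0 := by
    have h1 : ZMod.unitsMap hppf (ZMod.unitsMap hd G) = ZMod.unitsMap hpp G := by
      have h2 := DFunLike.congr_fun (ZMod.unitsMap_comp hppf hd) G
      simpa [MonoidHom.comp_apply] using h2
    rw [hu_def, h1, hG]
  have hord_mult : (p - 1) ∣ orderOf u := by
    have h1 : orderOf (ZMod.unitsMap hppf u) ∣ orderOf u := orderOf_map_dvd _ u
    rw [hredu, hordg0] at h1
    exact h1
  have hord_u_dvd : orderOf u ∣ (p - 1) * p ^ (f - 1) :=
    (Monoid.order_dvd_exponent u).trans (exponent_units_dvd p hp f hf)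
  obtain ⟨tq, htq⟩ := hord_mult
  have htq_pos : 0 < tq := by
    have := orderOf_pos u
    rcases Nat.eq_zero_or_pos tq with rfl | h
    · omega
    · exact h
  have hp1pos : 0 < p - 1 := by omega
  have htq_dvd : tq ∣ p ^ (f - 1) :=
    (Nat.mul_dvd_mul_iff_left hp1pos).mp (htq ▸ hord_u_dvd)
  have hcop_p_p1 : Nat.Coprime p (p - 1) := by
    have h : Nat.Coprime (1 + (p - 1)) (p - 1) := by
      rw [Nat.Coprime, Nat.gcd_add_self_left, Nat.gcd_one_left]
    rwa [show 1 + (p - 1) = p by omega] at h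
  have hgcd : Nat.gcd (orderOf u) (p ^ e) = tq := by
    apply Nat.dvd_antisymm
    · have h1 : Nat.gcd (orderOf u) (p ^ e) ∣ p ^ e := Nat.gcd_dvd_right _ _
      obtain ⟨j, hj, hOrd⟩ := (Nat.dvd_prime_pow hp).mp h1
      have h2 : Nat.gcd (orderOf u) (p ^ e) ∣ (p - 1) * tq := htq ▸ Nat.gcd_dvd_left _ _
      have hcopj : Nat.Coprime (p ^ j) (p - 1) := Nat.Coprime.pow_left _ hcop_p_p1
      rw [hOrd]
      exact Nat.Coprime.dvd_of_dvd_mul_left hcopj (hOrd ▸ h2)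
    · refine Nat.dvd_gcd ?_ (htq_dvd.trans (pow_dvd_pow p (by omega)))
      rw [htq]
      exact dvd_mul_left tq (p - 1)
  have hordupow : orderOf (u ^ (p ^ e)) = p - 1 := by
    rw [orderOf_pow, hgcd, htq, Nat.mul_div_cancel _ htq_pos]
  -- combine
  have hcop_ord : Nat.Coprime (orderOf (u ^ (p ^ e))) (orderOf t) := by
    rw [hordupow, ht_ord]
    exact Nat.Coprime.pow_right _ hcop_p_p1.symm
  have hordmul : orderOf (u ^ (p ^ e) * t) = (p - 1) * p ^ (f - 1) := by
    rw [(Commute.all (u ^ (p ^ e)) t).orderOf_mul_eq_mul_orderOf_of_coprime hcop_ord,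
      hordupow, ht_ord]
  rw [hmap, hordmul]
  exact exponent_units_dvd p hp f hf


-- NEW
/-- units of `ZMod (d1*d2)` for coprime factors -/
noncomputable def unitsCRT {d1 d2 : ℕ} (hco : d1.Coprime d2) :
    (ZMod (d1 * d2))ˣ ≃* (ZMod d1)ˣ × (ZMod d2)ˣ :=
  (Units.mapEquiv (ZMod.chineseRemainder hco).toMulEquiv).trans MulEquiv.prodUnits

lemma exponent_units_mul {d1 d2 : ℕ} (hco : d1.Coprime d2) :
    Monoid.exponent (ZMod (d1 * d2))ˣ
      = Nat.lcm (Monoid.exponent (ZMod d1)ˣ) (Monoid.exponent (ZMod d2)ˣ) := by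
  rw [Monoid.exponent_eq_of_mulEquiv (unitsCRT hco), Monoid.exponent_prod, lcm_eq_nat_lcm]

lemma chineseRemainder_fst {s t : ℕ} [NeZero (s * t)] (hco : s.Coprime t) (x : ZMod (s * t)) :
    (ZMod.chineseRemainder hco x).1 = ZMod.castHom (dvd_mul_right s t) (ZMod s) x := by
  have h1 : ZMod.chineseRemainder hco x
      = ZMod.castHom (show Nat.lcm s t ∣ s * t by simp [Nat.lcm_dvd_iff]) (ZMod s × ZMod t) x := rfl
  rw [h1, ZMod.castHom_apply, ZMod.castHom_apply]
  rw [ZMod.cast_eq_val, ZMod.cast_eq_val]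
  exact Prod.fst_natCast _

lemma chineseRemainder_snd {s t : ℕ} [NeZero (s * t)] (hco : s.Coprime t) (x : ZMod (s * t)) :
    (ZMod.chineseRemainder hco x).2 = ZMod.castHom (dvd_mul_left t s) (ZMod t) x := by
  have h1 : ZMod.chineseRemainder hco x
      = ZMod.castHom (show Nat.lcm s t ∣ s * t by simp [Nat.lcm_dvd_iff]) (ZMod s × ZMod t) x := rfl
  rw [h1, ZMod.castHom_apply, ZMod.castHom_apply]
  rw [ZMod.cast_eq_val, ZMod.cast_eq_val]
  exact Prod.snd_natCast _

lemma combine_good {s t : ℕ} (hs : 0 < s) (ht : 0 < t) (hco : s.Coprime t)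
    (H1 : ∃ a1 : (ZMod s)ˣ, ∀ d (h : d ∣ s),
      Monoid.exponent (ZMod d)ˣ ∣ orderOf (ZMod.unitsMap h a1))
    (H2 : ∃ a2 : (ZMod t)ˣ, ∀ d (h : d ∣ t),
      Monoid.exponent (ZMod d)ˣ ∣ orderOf (ZMod.unitsMap h a2)) :
    ∃ a : (ZMod (s * t))ˣ, ∀ d (h : d ∣ s * t),
      Monoid.exponent (ZMod d)ˣ ∣ orderOf (ZMod.unitsMap h a) := by
  haveI : NeZero (s * t) := ⟨Nat.mul_ne_zero hs.ne' ht.ne'⟩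
  obtain ⟨a1, h1⟩ := H1
  obtain ⟨a2, h2⟩ := H2
  set a : (ZMod (s * t))ˣ := (unitsCRT hco).symm (a1, a2) with ha
  have hval : (ZMod.chineseRemainder hco (a : ZMod (s * t)))
      = ((a1 : ZMod s), (a2 : ZMod t)) := by
    have h3 : (unitsCRT hco) a = (a1, a2) := by rw [ha, MulEquiv.apply_symm_apply]
    have h4 : ((Units.mapEquiv (ZMod.chineseRemainder hco).toMulEquiv) a : ZMod s × ZMod t)
        = ZMod.chineseRemainder hco (a : ZMod (s * t)) := rfl
    have h5 : MulEquiv.prodUnits ((Units.mapEquiv (ZMod.chineseRemainder hco).toMulEquiv) a)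
        = (a1, a2) := h3
    have h6 := congrArg (fun z : (ZMod s)ˣ × (ZMod t)ˣ => ((z.1 : ZMod s), (z.2 : ZMod t))) h5
    simp only at h6
    rw [← h4]
    convert h6 using 1
    rfl
  have hredS : ZMod.unitsMap (dvd_mul_right s t) a = a1 := by
    apply Units.ext
    rw [ZMod.unitsMap_def, Units.coe_map]
    show ZMod.castHom (dvd_mul_right s t) (ZMod s) (a : ZMod (s * t)) = _
    rw [← chineseRemainder_fst hco, hval]
  have hredT : ZMod.unitsMap (dvd_mul_left t s) a = a2 := by
    apply Units.ext
    rw [ZMod.unitsMap_def, Units.coe_map]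
    show ZMod.castHom (dvd_mul_left t s) (ZMod t) (a : ZMod (s * t)) = _
    rw [← chineseRemainder_snd hco, hval]
  refine ⟨a, ?_⟩
  intro d hd
  obtain ⟨d1, d2, hd1, hd2, rfl⟩ := Nat.dvd_mul.mp hd
  have hcod : d1.Coprime d2 :=
    Nat.Coprime.coprime_dvd_left hd1 (Nat.Coprime.coprime_dvd_right hd2 hco)
  rw [exponent_units_mul hcod]
  apply Nat.lcm_dvd
  · -- exponent (ZMod d1)ˣ ∣ orderOf (unitsMap hd a)
    have h11 : d1 ∣ d1 * d2 := dvd_mul_right _ _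
    have hcomp1 : ZMod.unitsMap h11 (ZMod.unitsMap hd a) = ZMod.unitsMap hd1 a1 := by
      have e1 := DFunLike.congr_fun (ZMod.unitsMap_comp h11 hd) a
      have e2 := DFunLike.congr_fun (ZMod.unitsMap_comp hd1 (dvd_mul_right s t)) a
      simp only [MonoidHom.comp_apply] at e1 e2
      rw [e1, ← hredS, e2]
    calc Monoid.exponent (ZMod d1)ˣ ∣ orderOf (ZMod.unitsMap hd1 a1) := h1 d1 hd1
      _ = orderOf (ZMod.unitsMap h11 (ZMod.unitsMap hd a)) := by rw [hcomp1]
      _ ∣ orderOf (ZMod.unitsMap hd a) := orderOf_map_dvd _ _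
  · have h22 : d2 ∣ d1 * d2 := dvd_mul_left _ _
    have hcomp2 : ZMod.unitsMap h22 (ZMod.unitsMap hd a) = ZMod.unitsMap hd2 a2 := by
      have e1 := DFunLike.congr_fun (ZMod.unitsMap_comp h22 hd) a
      have e2 := DFunLike.congr_fun (ZMod.unitsMap_comp hd2 (dvd_mul_left t s)) a
      simp only [MonoidHom.comp_apply] at e1 e2
      rw [e1, ← hredT, e2]
    calc Monoid.exponent (ZMod d2)ˣ ∣ orderOf (ZMod.unitsMap hd2 a2) := h2 d2 hd2
      _ = orderOf (ZMod.unitsMap h22 (ZMod.unitsMap hd a)) := by rw [hcomp2]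
      _ ∣ orderOf (ZMod.unitsMap hd a) := orderOf_map_dvd _ _

lemma exists_good : ∀ n : ℕ, 0 < n →
    ∃ a : (ZMod n)ˣ, ∀ d (h : d ∣ n),
      Monoid.exponent (ZMod d)ˣ ∣ orderOf (ZMod.unitsMap h a) := by
  intro n
  induction n using Nat.strong_induction_on with
  | _ n IH =>
    intro hn
    by_cases h1 : n = 1
    · subst h1
      refine ⟨1, ?_⟩
      intro d hd
      have hd1 : d = 1 := Nat.dvd_one.mp hd
      subst hd1
      exact exponent_units_one_dvd (by norm_num) _
    · have h2 : 2 ≤ n := by omega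
      set p := n.minFac with hp_def
      have hp : p.Prime := Nat.minFac_prime h1
      set e := n.factorization p with he_def
      have he : 1 ≤ e := by
        rw [he_def]
        exact (Nat.Prime.factorization_pos_of_dvd hp (by omega) (Nat.minFac_dvd n))
      have hsd : p ^ e ∣ n := Nat.ordProj_dvd n p
      have hsm : p ^ e * (n / p ^ e) = n := Nat.ordProj_mul_ordCompl_eq_self n p
      have hco : (p ^ e).Coprime (n / p ^ e) :=
        Nat.Coprime.pow_left _ (Nat.coprime_ordCompl hp (by omega))
      have hbase : ∃ a1 : (ZMod (p ^ e))ˣ, ∀ d (h : d ∣ p ^ e),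
          Monoid.exponent (ZMod d)ˣ ∣ orderOf (ZMod.unitsMap h a1) := by
        rcases eq_or_ne p 2 with hq | hodd
        · rw [hq]; exact primePow_good_two e he
        · exact primePow_good_odd p hp (by have := hp.two_le; omega) e he
      by_cases hm1 : n / p ^ e = 1
      · have hns : n = p ^ e := by rw [← hsm, hm1, mul_one]
        rw [hns]
        exact hbase
      · have hmpos : 0 < n / p ^ e := Nat.ordCompl_pos p (by omega)
        have hspos : 0 < p ^ e := pow_pos hp.pos e
        have hs2 : 2 ≤ p ^ e := by
          calc 2 ≤ p := hp.two_le
            _ = p ^ 1 := (pow_one p).symm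
            _ ≤ p ^ e := Nat.pow_le_pow_right hp.pos he
        have hm2 : 2 ≤ n / p ^ e := by omega
        have hslt : p ^ e < n := by nlinarith [hsm]
        have hmlt : n / p ^ e < n := by nlinarith [hsm]
        have H1 := IH (p ^ e) hslt hspos
        have H2 := IH (n / p ^ e) hmlt hmpos
        have := combine_good hspos hmpos hco H1 H2
        rw [hsm] at this
        exact this


-- NEW
section
variable [NeZero n]

lemma tCoset_affine (a : (ZMod n)ˣ) (b : ZMod n) :
    tCoset (affine a b) = n - cyc (affine a (0 : ZMod n)) := by
  apply le_antisymm
  · apply Nat.sInf_le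
    refine ⟨-(((a⁻¹ : (ZMod n)ˣ) : ZMod n) * b), ?_⟩
    rw [affine_mul_addRight]
    have : (a : ZMod n) * -(((a⁻¹ : (ZMod n)ˣ) : ZMod n) * b) + b = 0 := by
      have hid : (a : ZMod n) * ((a⁻¹ : (ZMod n)ˣ) : ZMod n) = 1 := by
        rw [← Units.val_mul, mul_inv_cancel, Units.val_one]
      calc (a : ZMod n) * -(((a⁻¹ : (ZMod n)ˣ) : ZMod n) * b) + b
          = -((a : ZMod n) * ((a⁻¹ : (ZMod n)ˣ) : ZMod n) * b) + b := by ring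
        _ = 0 := by rw [hid, one_mul, neg_add_cancel]
    rw [this]
    rfl
  · refine le_csInf ⟨_, ⟨0, rfl⟩⟩ ?_
    rintro m ⟨k, rfl⟩
    rw [affine_mul_addRight]
    exact Nat.sub_le_sub_left (cyc_affine_le a _) n

lemma ordRed_dvd_exponent (a : (ZMod n)ˣ) (d : ℕ) (hd : d ∣ n) :
    ordRed n a d ∣ Monoid.exponent (ZMod d)ˣ := by
  rw [ordRed, dif_pos hd]
  exact Monoid.order_dvd_exponent _

lemma sval_le_sum (a : (ZMod n)ˣ) :
    ∑ d ∈ n.divisors, d.totient / Monoid.exponent (ZMod d)ˣ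
      ≤ ∑ d ∈ n.divisors, d.totient / ordRed n a d := by
  apply Finset.sum_le_sum
  intro d hd
  obtain ⟨hdvd, -⟩ := Nat.mem_divisors.mp hd
  haveI : NeZero d := ⟨fun h => NeZero.ne n (Nat.eq_zero_of_zero_dvd (h ▸ hdvd))⟩
  apply Nat.div_le_div_left
  · exact Nat.le_of_dvd
      (Nat.pos_of_ne_zero (Monoid.exponent_ne_zero_of_finite))
      (ordRed_dvd_exponent a d hdvd)
  · exact ordRed_pos a d hdvd

end

end TAffAux

open TAffAux in
theorem tAff_eq (n : ℕ) (hn : 0 < n) :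
    sSup { m : ℕ | ∃ π : Equiv.Perm (ZMod n),
        (∃ (a : (ZMod n)ˣ) (b : ZMod n), ∀ x : ZMod n, π x = (a : ZMod n) * x + b) ∧
        m = tCoset π }
      = n - ∑ d ∈ n.divisors, d.totient / Monoid.exponent (ZMod d)ˣ := by
  haveI : NeZero n := ⟨hn.ne'⟩
  obtain ⟨a₀, ha₀⟩ := exists_good n hn
  have hstar : cyc (affine a₀ (0 : ZMod n))
      = ∑ d ∈ n.divisors, d.totient / Monoid.exponent (ZMod d)ˣ := by
    rw [cyc_affine_zero a₀]
    apply Finset.sum_congr rfl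
    intro d hd
    obtain ⟨hdvd, -⟩ := Nat.mem_divisors.mp hd
    have : ordRed n a₀ d = Monoid.exponent (ZMod d)ˣ := by
      apply Nat.dvd_antisymm (ordRed_dvd_exponent a₀ d hdvd)
      rw [ordRed, dif_pos hdvd]
      exact ha₀ d hdvd
    rw [this]
  have hmemval : tCoset (affine a₀ (0 : ZMod n))
      = n - ∑ d ∈ n.divisors, d.totient / Monoid.exponent (ZMod d)ˣ := by
    rw [tCoset_affine, hstar]
  apply le_antisymm
  · apply csSup_le
    · exact ⟨_, ⟨affine a₀ 0, ⟨a₀, 0, fun x => affine_apply a₀ 0 x⟩, rfl⟩⟩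
    · rintro m ⟨π, ⟨a, b, hab⟩, rfl⟩
      have hπ : π = affine a b := Equiv.ext fun x => (hab x).trans (affine_apply a b x).symm
      rw [hπ, tCoset_affine]
      apply Nat.sub_le_sub_left
      rw [cyc_affine_zero a]
      exact sval_le_sum a
  · apply le_csSup
    · refine ⟨n, ?_⟩
      rintro m ⟨π, -, rfl⟩
      calc tCoset π ≤ tPerm (π * Equiv.addRight 0) := Nat.sInf_le ⟨0, rfl⟩
        _ ≤ n := Nat.sub_le _ _
    · exact ⟨affine a₀ 0, ⟨a₀, 0, fun x => affine_apply a₀ 0 x⟩, hmemval.symm⟩
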